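/- Let τ = ±1, κ ∈ ℝ, and let 𝕃 be the 4×4 real matrix with rows (0, τ, 0, −1), (κ−τ, 0, 1, 0), (0, −1, 0, τ), (1, 0, κ−τ, 0). Then the kernel of 𝕃 is spanned by (0,1,0,τ), the kernel of 𝕃² is spanned by (0,1,0,τ) and (1,0,τ,0), and every nonzero eigenvalue λ of 𝕃 satisfies λ² = −4 + 2τκ. -/
import Mathlib


/-- Spectral structure of the linearization matrix `𝕃` of the Hartree system about the
state `(1,τ)/√2`: `Ker 𝕃 = span{(0,1,0,τ)}`, `Ker 𝕃² = span{(0,1,0,τ),(1,0,τ,0)}`, and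
every nonzero (complex) eigenvalue `λ` satisfies `λ² = -4 + 2τκ`. -/
theorem stmt_9 (κ τ : ℝ) (hτ : τ = 1 ∨ τ = -1) (hκ : κ * (κ - 2 * τ) ≠ 0)
    (L : Matrix (Fin 4) (Fin 4) ℝ)
    (hL : L = !![0, τ, 0, -1; κ - τ, 0, 1, 0; 0, -1, 0, τ; 1, 0, κ - τ, 0]) :
    LinearMap.ker (Matrix.toLin' L) = Submodule.span ℝ {![0, 1, 0, τ]} ∧
    LinearMap.ker (Matrix.toLin' (L * L))
        = Submodule.span ℝ {![0, 1, 0, τ], ![1, 0, τ, 0]} ∧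
    ∀ (lam : ℂ) (x : Fin 4 → ℂ), x ≠ 0 →
      (L.map (fun a : ℝ => (a : ℂ))).mulVec x = lam • x → lam ≠ 0 →
        lam ^ 2 = -4 + 2 * (τ : ℂ) * (κ : ℂ) := by
  have hτ2 : τ * τ = 1 := by rcases hτ with rfl | rfl <;> norm_num
  have ha : τ * κ - 2 ≠ 0 := by
    intro h
    exact hκ (by linear_combination τ * κ * h - κ ^ 2 * hτ2)
  subst hL
  refine ⟨?_, ?_, ?_⟩
  · -- kernel of L
    apply le_antisymm
    · intro x hx
      have hx' : Matrix.toLin'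
          !![0, τ, 0, -1; κ - τ, 0, 1, 0; 0, -1, 0, τ; 1, 0, κ - τ, 0] x = 0 := hx
      have e0 := congrFun hx' 0
      have e1 := congrFun hx' 1
      have e2 := congrFun hx' 2
      have e3 := congrFun hx' 3
      simp [Matrix.toLin'_apply, Matrix.mulVec, dotProduct,
        Fin.sum_univ_four] at e0 e1 e2 e3
      have h0 : x 0 = 0 := by
        have h : κ * (κ - 2 * τ) * x 0 = 0 := by
          linear_combination (κ - τ) * e1 - e3 - x 0 * hτ2
        exact (mul_eq_zero.mp h).resolve_left hκ
      have h2 : x 2 = 0 := by linear_combination e1 - (κ - τ) * h0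
      have h3 : x 3 = τ * x 1 := by linear_combination -e0
      rw [Submodule.mem_span_singleton]
      refine ⟨x 1, ?_⟩
      funext i
      fin_cases i <;> simp [h0, h2, h3, mul_comm]
    · rw [Submodule.span_le]
      rintro v hv
      simp only [Set.mem_singleton_iff] at hv
      subst hv
      simp only [SetLike.mem_coe, LinearMap.mem_ker, Matrix.toLin'_apply]
      funext i
      fin_cases i <;>
        simp [Matrix.mulVec, dotProduct, Fin.sum_univ_four] <;>
        linear_combination hτ2
  · -- kernel of L²
    apply le_antisymm
    · intro x hx
      have hx' : Matrix.toLin'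
          (!![0, τ, 0, -1; κ - τ, 0, 1, 0; 0, -1, 0, τ; 1, 0, κ - τ, 0] *
           !![0, τ, 0, -1; κ - τ, 0, 1, 0; 0, -1, 0, τ; 1, 0, κ - τ, 0]) x = 0 := hx
      have e0 := congrFun hx' 0
      have e1 := congrFun hx' 1
      simp [Matrix.toLin'_apply, Matrix.mulVec, dotProduct, Matrix.mul_apply,
        Fin.sum_univ_four] at e0 e1
      -- e0 : (τ * (κ - τ) + -1) * x 0 + (τ + (τ - κ)) * x 2 = 0
      -- e1 : ((κ - τ) * τ + -1) * x 1 + (τ - κ + τ) * x 3 = 0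
      have h2 : x 2 = τ * x 0 := by
        have h : (τ * κ - 2) * (x 2 - τ * x 0) = 0 := by
          linear_combination (-τ) * e0 + (2 * x 2 - τ * x 0) * hτ2
        have := (mul_eq_zero.mp h).resolve_left ha
        linarith [this]
      have h3 : x 3 = τ * x 1 := by
        have h : (τ * κ - 2) * (x 3 - τ * x 1) = 0 := by
          linear_combination (-τ) * e1 + (2 * x 3 - τ * x 1) * hτ2
        have := (mul_eq_zero.mp h).resolve_left ha
        linarith [this]
      rw [Submodule.mem_span_pair]
      refine ⟨x 1, x 0, ?_⟩
      funext i
      fin_cases i <;> simp [h2, h3, mul_comm]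
    · rw [Submodule.span_le]
      rintro v hv
      simp only [Set.mem_insert_iff, Set.mem_singleton_iff] at hv
      rcases hv with rfl | rfl <;>
      · simp only [SetLike.mem_coe, LinearMap.mem_ker, Matrix.toLin'_apply]
        funext i
        fin_cases i <;>
          simp [Matrix.mulVec, dotProduct, Matrix.mul_apply, Fin.sum_univ_four] <;>
          first
            | linear_combination (κ - τ) * hτ2
            | linear_combination hτ2
  · -- eigenvalues
    intro lam x hx0 hE hlam
    have hτ2C : (τ : ℂ) * (τ : ℂ) = 1 := by exact_mod_cast hτ2
    have e0 := congrFun hE 0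
    have e1 := congrFun hE 1
    have e2 := congrFun hE 2
    have e3 := congrFun hE 3
    simp [Matrix.mulVec, dotProduct, Matrix.map_apply, Fin.sum_univ_four] at e0 e1 e2 e3
    -- e0 : ↑τ * x 1 + -x 3 = lam * x 0
    -- e1 : (↑κ - ↑τ) * x 0 + x 2 = lam * x 1
    -- e2 : -x 1 + ↑τ * x 3 = lam * x 2
    -- e3 : x 0 + (↑κ - ↑τ) * x 2 = lam * x 3
    have hu : lam * (x 0 - (τ : ℂ) * x 2) = 2 * (τ : ℂ) * (x 1 - (τ : ℂ) * x 3) := by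
      linear_combination -e0 + (τ : ℂ) * e2 + x 3 * hτ2C
    have hv : lam * (x 1 - (τ : ℂ) * x 3) = ((κ : ℂ) - 2 * τ) * (x 0 - (τ : ℂ) * x 2) := by
      linear_combination -e1 + (τ : ℂ) * e3 - x 2 * hτ2C
    by_cases hU : x 0 - (τ : ℂ) * x 2 = 0
    · by_cases hV : x 1 - (τ : ℂ) * x 3 = 0
      · exfalso
        apply hx0
        have h0 : x 0 = 0 := by
          have h : lam * x 0 = 0 := by linear_combination -e0 + (τ : ℂ) * hV + x 3 * hτ2C
          exact (mul_eq_zero.mp h).resolve_left hlam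
        have h2 : x 2 = 0 := by linear_combination -(τ : ℂ) * hU + (τ : ℂ) * h0 - x 2 * hτ2C
        have h1 : x 1 = 0 := by
          have h : lam * x 1 = 0 := by linear_combination -e1 + ((κ : ℂ) - τ) * h0 + h2
          exact (mul_eq_zero.mp h).resolve_left hlam
        have h3 : x 3 = 0 := by linear_combination -(τ : ℂ) * hV + (τ : ℂ) * h1 - x 3 * hτ2C
        funext i
        fin_cases i <;> assumption
      · have key : (lam ^ 2 - (-4 + 2 * (τ : ℂ) * κ)) * (x 1 - (τ : ℂ) * x 3) = 0 := by
          linear_combination lam * hv + ((κ : ℂ) - 2 * τ) * hu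
            - 4 * (x 1 - (τ : ℂ) * x 3) * hτ2C
        have := (mul_eq_zero.mp key).resolve_right hV
        linear_combination this
    · have key : (lam ^ 2 - (-4 + 2 * (τ : ℂ) * κ)) * (x 0 - (τ : ℂ) * x 2) = 0 := by
        linear_combination lam * hu + 2 * (τ : ℂ) * hv
          - 4 * (x 0 - (τ : ℂ) * x 2) * hτ2C
      have := (mul_eq_zero.mp key).resolve_right hU
      linear_combination this
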